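/- (Conditional stochastic domination.) Let V be in the class 𝒞, N ≥ 2, and let A, B ⊂ Ω_N be increasing Borel sets of positive π_N-measure such that whenever x ∈ A and y ∈ B one has min(x,y) ∈ B, where min(x,y)_i := min(x_i,y_i). Then π_N(·|A) stochastically dominates π_N(·|B): for every bounded measurable increasing function f : Ω_N → ℝ, π_N(f | A) ≥ π_N(f | B). -/

import Mathlib

open MeasureTheory Filter Real
open scoped ENNReal

noncomputable section

/-- The class 𝒞 of potentials: convex, at most polynomial growth, non-affine
(the asymptotic slopes at `+∞` and `-∞`, taken in the extended reals, differ). -/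
structure InClassC (V : ℝ → ℝ) : Prop where
  convex : ConvexOn ℝ Set.univ V
  growth : ∃ C > (0 : ℝ), ∃ K : ℝ, 1 ≤ K ∧ ∀ x : ℝ, |V x| ≤ C * (1 + |x|) ^ K
  slopes : ∃ vm vp : EReal,
    Tendsto (fun x : ℝ => ((V x / x : ℝ) : EReal)) atBot (nhds vm) ∧
    Tendsto (fun x : ℝ => ((V x / x : ℝ) : EReal)) atTop (nhds vp) ∧
    vm < vp

/-- Configuration in `Ω_N` built from the `N-1` inner coordinates: coordinates
`1,…,N-1` are free, all others (in particular `0` and `N`) vanish. -/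
def conf (N : ℕ) (y : Fin (N - 1) → ℝ) : ℕ → ℝ := fun k =>
  if h : 1 ≤ k ∧ k ≤ N - 1 then y ⟨k - 1, by omega⟩ else 0

/-- The Hamiltonian `H(x) = Σ_{k=1}^N V(x_k - x_{k-1})`. -/
def Ham (V : ℝ → ℝ) (N : ℕ) (x : ℕ → ℝ) : ℝ :=
  ∑ k ∈ Finset.range N, V (x (k + 1) - x k)

/-- Normalisation constant `Z_N`. -/
def Zpart (V : ℝ → ℝ) (N : ℕ) : ℝ :=
  ∫ y : Fin (N - 1) → ℝ, Real.exp (-(Ham V N (conf N y)))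

/-- The Gibbs measure `π_N` on `Ω_N`, viewed as a measure on configurations `ℕ → ℝ`:
the inner coordinates have density `e^{-H}/Z_N` w.r.t. Lebesgue measure. -/
def piN (V : ℝ → ℝ) (N : ℕ) : Measure (ℕ → ℝ) :=
  Measure.map (conf N)
    (volume.withDensity fun y : Fin (N - 1) → ℝ =>
      ENNReal.ofReal (Real.exp (-(Ham V N (conf N y))) / Zpart V N))


/-- Scalar lemma for the 1-D Ahlswede–Daykin argument (real version). -/
lemma real_ad_scalar {P Q S T : ℝ} (hP0 : 0 ≤ P) (hQ0 : 0 ≤ Q) (hT0 : 0 ≤ T)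
    (hP : P ≤ S) (hQ : Q ≤ S) (hPQ : P * Q ≤ S * T) : P + Q ≤ S + T := by
  rcases le_or_gt S 0 with hS | hS
  · have : P = 0 := le_antisymm (hP.trans hS) hP0
    have : Q = 0 := le_antisymm (hQ.trans hS) hQ0
    simp_all
    linarith
  · nlinarith [mul_nonneg (sub_nonneg.2 hP) (sub_nonneg.2 hQ)]

/-- Scalar lemma, `ℝ≥0∞` version. -/
lemma ennreal_ad_scalar {p q s t : ℝ≥0∞} (hp : p ≤ s) (hq : q ≤ s) (hpq : p * q ≤ s * t) :
    p + q ≤ s + t := by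
  rcases eq_or_ne s ⊤ with hs | hs
  · simp [hs]
  rcases eq_or_ne t ⊤ with ht | ht
  · simp [ht]
  have hpt : p ≠ ⊤ := ne_top_of_le_ne_top hs hp
  have hqt : q ≠ ⊤ := ne_top_of_le_ne_top hs hq
  rw [← ENNReal.ofReal_toReal hpt, ← ENNReal.ofReal_toReal hqt, ← ENNReal.ofReal_toReal hs,
    ← ENNReal.ofReal_toReal ht, ← ENNReal.ofReal_add ENNReal.toReal_nonneg ENNReal.toReal_nonneg,
    ← ENNReal.ofReal_add ENNReal.toReal_nonneg ENNReal.toReal_nonneg]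
  apply ENNReal.ofReal_le_ofReal
  apply real_ad_scalar ENNReal.toReal_nonneg ENNReal.toReal_nonneg ENNReal.toReal_nonneg
  · exact ENNReal.toReal_mono hs hp
  · exact ENNReal.toReal_mono hs hq
  · rw [← ENNReal.toReal_mul, ← ENNReal.toReal_mul]
    exact ENNReal.toReal_mono (ENNReal.mul_ne_top hs ht) hpq
noncomputable section

/-- The Ahlswede–Daykin / four functions property of a measure on a lattice. -/
def ADprop {X : Type*} [MeasurableSpace X] [Lattice X] (μ : Measure X) : Prop :=
  ∀ α β γ δ : X → ℝ≥0∞, Measurable α → Measurable β → Measurable γ → Measurable δ →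
    (∀ x y, γ x * δ y ≤ α (x ⊔ y) * β (x ⊓ y)) →
    (∫⁻ x, γ x ∂μ) * (∫⁻ x, δ x ∂μ) ≤ (∫⁻ x, α x ∂μ) * (∫⁻ x, β x ∂μ)

lemma prod_diag_null (μ : Measure ℝ) [SigmaFinite μ] [NullSingletonClass μ] :
    (μ.prod μ) {p : ℝ × ℝ | p.1 = p.2} = 0 := by
  have hD : MeasurableSet {p : ℝ × ℝ | p.1 = p.2} :=
    measurableSet_eq_fun measurable_fst measurable_snd
  rw [Measure.prod_apply hD]
  have : ∀ x : ℝ, (Prod.mk x ⁻¹' {p : ℝ × ℝ | p.1 = p.2}) = {x} := by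
    intro x; ext y; simp [eq_comm]
  simp [this]

/-- Ahlswede–Daykin inequality for an atomless σ-finite measure on `ℝ`. -/
lemma ad_real (μ : Measure ℝ) [SigmaFinite μ] [NullSingletonClass μ] : ADprop μ := by
  intro α β γ δ hα hβ hγ hδ h
  set ρ := μ.prod μ with hρ
  have hs : MeasurableSet {p : ℝ × ℝ | p.2 < p.1} := measurableSet_lt measurable_snd measurable_fst
  have hu : MeasurableSet {p : ℝ × ℝ | p.1 < p.2} := measurableSet_lt measurable_fst measurable_snd
  -- complement of s is a.e. equal to u
  have hcompl : ({p : ℝ × ℝ | p.2 < p.1}ᶜ : Set (ℝ × ℝ)) =ᵐ[ρ] ({p : ℝ × ℝ | p.1 < p.2} : Set (ℝ × ℝ)) := by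
    have hnull : (ρ) {p : ℝ × ℝ | p.1 = p.2} = 0 := prod_diag_null μ
    rw [Filter.eventuallyEq_set]
    have : ∀ᵐ p ∂ρ, ¬ (p : ℝ × ℝ).1 = p.2 := by
      rw [ae_iff]; simpa using hnull
    filter_upwards [this] with p hp
    show (¬ p.2 < p.1) ↔ p.1 < p.2
    rw [not_lt]
    exact ⟨fun h1 => lt_of_le_of_ne h1 hp, le_of_lt⟩
  -- splitting of the double integral
  have key : ∀ g h' : ℝ → ℝ≥0∞, Measurable g → Measurable h' →
      (∫⁻ x, g x ∂μ) * (∫⁻ x, h' x ∂μ) =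
        ∫⁻ p in {p : ℝ × ℝ | p.2 < p.1}, (g p.1 * h' p.2 + g p.2 * h' p.1) ∂ρ := by
    intro g h' hg hh
    have hF : Measurable fun p : ℝ × ℝ => g p.1 * h' p.2 :=
      (hg.comp measurable_fst).mul (hh.comp measurable_snd)
    have hG : Measurable fun p : ℝ × ℝ => g p.2 * h' p.1 :=
      (hg.comp measurable_snd).mul (hh.comp measurable_fst)
    have h1 : (∫⁻ x, g x ∂μ) * (∫⁻ x, h' x ∂μ) = ∫⁻ p, g p.1 * h' p.2 ∂ρ :=
      (lintegral_prod_mul hg.aemeasurable hh.aemeasurable).symm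
    have h2 : (∫⁻ p, g p.1 * h' p.2 ∂ρ) =
        (∫⁻ p in {p : ℝ × ℝ | p.2 < p.1}, g p.1 * h' p.2 ∂ρ)
          + ∫⁻ p in {p : ℝ × ℝ | p.2 < p.1}ᶜ, g p.1 * h' p.2 ∂ρ :=
      (lintegral_add_compl _ hs).symm
    have h3 : (∫⁻ p in {p : ℝ × ℝ | p.2 < p.1}ᶜ, g p.1 * h' p.2 ∂ρ)
        = ∫⁻ p in {p : ℝ × ℝ | p.1 < p.2}, g p.1 * h' p.2 ∂ρ := by
      rw [Measure.restrict_congr_set hcompl]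
    have h4 : (∫⁻ p in {p : ℝ × ℝ | p.1 < p.2}, g p.1 * h' p.2 ∂ρ)
        = ∫⁻ p in {p : ℝ × ℝ | p.2 < p.1}, g p.2 * h' p.1 ∂ρ := by
      have hswap : ρ = Measure.map Prod.swap ρ := (Measure.prod_swap).symm
      conv_lhs => rw [hswap]
      rw [setLIntegral_map hu hF measurable_swap]
      rfl
    rw [h1, h2, h3, h4, ← lintegral_add_left hF]
  rw [key γ δ hγ hδ, key α β hα hβ]
  apply setLIntegral_mono' hs
  intro p hp
  have hyx : p.2 ≤ p.1 := le_of_lt hp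
  apply ennreal_ad_scalar
  · have := h p.1 p.2
    rwa [sup_eq_left.2 hyx, inf_eq_right.2 hyx] at this
  · have := h p.2 p.1
    rwa [sup_eq_right.2 hyx, inf_eq_left.2 hyx] at this
  · have h11 := h p.1 p.1
    have h22 := h p.2 p.2
    rw [sup_idem, inf_idem] at h11 h22
    calc γ p.1 * δ p.2 * (γ p.2 * δ p.1) = (γ p.1 * δ p.1) * (γ p.2 * δ p.2) := by ring
      _ ≤ (α p.1 * β p.1) * (α p.2 * β p.2) := mul_le_mul' h11 h22
      _ = α p.1 * β p.2 * (α p.2 * β p.1) := by ring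
/-- Tensorization step for Ahlswede–Daykin. -/
lemma ad_prod {X : Type*} [MeasurableSpace X] [Lattice X] (μ : Measure X) [SigmaFinite μ]
    (hX : ADprop μ) : ADprop ((volume : Measure ℝ).prod μ) := by
  intro α β γ δ hα hβ hγ hδ h
  set Iα : ℝ → ℝ≥0∞ := fun s => ∫⁻ x, α (s, x) ∂μ with hIα
  set Iβ : ℝ → ℝ≥0∞ := fun s => ∫⁻ x, β (s, x) ∂μ with hIβ
  set Iγ : ℝ → ℝ≥0∞ := fun s => ∫⁻ x, γ (s, x) ∂μ with hIγ
  set Iδ : ℝ → ℝ≥0∞ := fun s => ∫⁻ x, δ (s, x) ∂μ with hIδ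
  have hIαm : Measurable Iα := hα.lintegral_prod_right'
  have hIβm : Measurable Iβ := hβ.lintegral_prod_right'
  have hIγm : Measurable Iγ := hγ.lintegral_prod_right'
  have hIδm : Measurable Iδ := hδ.lintegral_prod_right'
  have hcond : ∀ s t : ℝ, Iγ s * Iδ t ≤ Iα (s ⊔ t) * Iβ (s ⊓ t) := by
    intro s t
    apply hX (fun x => α (s ⊔ t, x)) (fun x => β (s ⊓ t, x)) (fun x => γ (s, x))
      (fun x => δ (t, x)) (hα.comp measurable_prodMk_left) (hβ.comp measurable_prodMk_left)
      (hγ.comp measurable_prodMk_left) (hδ.comp measurable_prodMk_left)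
    intro x y
    have := h (s, x) (t, y)
    simpa [Prod.sup_def, Prod.inf_def] using this
  have main := ad_real volume Iα Iβ Iγ Iδ hIαm hIβm hIγm hIδm hcond
  rw [lintegral_prod _ hα.aemeasurable, lintegral_prod _ hβ.aemeasurable,
    lintegral_prod _ hγ.aemeasurable, lintegral_prod _ hδ.aemeasurable]
  exact main

/-- Transport of the AD property along a measure-preserving lattice-isomorphism. -/
lemma ad_transport {X Y : Type*} [MeasurableSpace X] [MeasurableSpace Y] [Lattice X] [Lattice Y]
    (e : X ≃ᵐ Y) (hsup : ∀ a b, e (a ⊔ b) = e a ⊔ e b) (hinf : ∀ a b, e (a ⊓ b) = e a ⊓ e b)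
    {μ : Measure X} {ν : Measure Y} (hmap : Measure.map e μ = ν) (hY : ADprop ν) : ADprop μ := by
  intro α β γ δ hα hβ hγ hδ h
  have hsymm_sup : ∀ a b : Y, e.symm (a ⊔ b) = e.symm a ⊔ e.symm b := by
    intro a b
    apply e.injective
    rw [hsup, e.apply_symm_apply, e.apply_symm_apply, e.apply_symm_apply]
  have hsymm_inf : ∀ a b : Y, e.symm (a ⊓ b) = e.symm a ⊓ e.symm b := by
    intro a b
    apply e.injective
    rw [hinf, e.apply_symm_apply, e.apply_symm_apply, e.apply_symm_apply]
  have key := hY (α ∘ e.symm) (β ∘ e.symm) (γ ∘ e.symm) (δ ∘ e.symm)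
    (hα.comp e.symm.measurable) (hβ.comp e.symm.measurable)
    (hγ.comp e.symm.measurable) (hδ.comp e.symm.measurable)
    (by intro x y
        simp only [Function.comp_apply, hsymm_sup, hsymm_inf]
        exact h _ _)
  have hli : ∀ g : X → ℝ≥0∞, Measurable g → (∫⁻ y, (g ∘ e.symm) y ∂ν) = ∫⁻ x, g x ∂μ := by
    intro g hg
    rw [← hmap, lintegral_map (hg.comp e.symm.measurable) e.measurable]
    simp
  rwa [hli α hα, hli β hβ, hli γ hγ, hli δ hδ] at key

/-- Ahlswede–Daykin for Lebesgue measure on `ℝ^n`. -/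
lemma ad_pi : ∀ n : ℕ, ADprop (volume : Measure (Fin n → ℝ)) := by
  intro n
  induction n with
  | zero =>
    intro α β γ δ hα hβ hγ hδ h
    have huniv : (volume : Measure (Fin 0 → ℝ)) Set.univ = 1 := by
      rw [volume_pi, Measure.pi_univ]
      simp
    rw [lintegral_unique, lintegral_unique, lintegral_unique, lintegral_unique, huniv]
    have := h default default
    rw [sup_idem, inf_idem] at this
    simp only [mul_one]
    convert this using 2 <;> exact congrArg _ (Subsingleton.elim _ _)
  | succ n ih =>
    let e : (Fin (n + 1) → ℝ) ≃ᵐ ℝ × (Fin n → ℝ) :=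
      MeasurableEquiv.piFinSuccAbove (fun _ => ℝ) 0
    have hmap : Measure.map e volume
        = (volume : Measure ℝ).prod (volume : Measure (Fin n → ℝ)) := by
      have h2 := (measurePreserving_piFinSuccAbove
        (fun _ : Fin (n + 1) => (volume : Measure ℝ)) 0).map_eq
      calc Measure.map e volume
          = Measure.map (MeasurableEquiv.piFinSuccAbove (fun _ : Fin (n + 1) => ℝ) 0)
              (Measure.pi fun _ => volume) := by rw [← volume_pi]
        _ = (volume : Measure ℝ).prod (Measure.pi fun _ => (volume : Measure ℝ)) := h2
        _ = (volume : Measure ℝ).prod (volume : Measure (Fin n → ℝ)) := by rw [← volume_pi]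
    exact ad_transport e (fun a b => rfl) (fun a b => rfl) hmap (ad_prod _ ih)
lemma convex_pair_aux {V : ℝ → ℝ} (hV : ConvexOn ℝ Set.univ V) {u v M : ℝ}
    (h1 : u ≤ M) (h2 : M ≤ v) : V M + V (u + v - M) ≤ V u + V v := by
  rcases eq_or_lt_of_le (h1.trans h2) with huv | huv
  · have hM : M = u := le_antisymm (huv ▸ h2) h1
    rw [hM]
    ring_nf
    simp [add_comm]
  · set θ : ℝ := (M - u) / (v - u) with hθ
    have hvu : 0 < v - u := by linarith
    have hθ0 : 0 ≤ θ := div_nonneg (by linarith) hvu.le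
    have hθ1 : θ ≤ 1 := (div_le_one hvu).2 (by linarith)
    have hM : M = (1 - θ) * u + θ * v := by
      have h' : θ * (v - u) = M - u := by rw [hθ]; exact div_mul_cancel₀ _ hvu.ne'
      linarith
    have hm : u + v - M = θ * u + (1 - θ) * v := by rw [hM]; ring
    have c1 := hV.2 (Set.mem_univ u) (Set.mem_univ v) (by linarith : (0:ℝ) ≤ 1 - θ) hθ0
      (by ring : (1 - θ) + θ = 1)
    have c2 := hV.2 (Set.mem_univ u) (Set.mem_univ v) hθ0 (by linarith : (0:ℝ) ≤ 1 - θ)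
      (by ring : θ + (1 - θ) = 1)
    simp only [smul_eq_mul] at c1 c2
    rw [hm, hM]
    calc V ((1 - θ) * u + θ * v) + V (θ * u + (1 - θ) * v)
        ≤ ((1 - θ) * V u + θ * V v) + (θ * V u + (1 - θ) * V v) := add_le_add c1 c2
      _ = V u + V v := by ring

lemma convex_pair {V : ℝ → ℝ} (hV : ConvexOn ℝ Set.univ V) {u v M : ℝ}
    (h1 : min u v ≤ M) (h2 : M ≤ max u v) : V M + V (u + v - M) ≤ V u + V v := by
  rcases le_total u v with h | h
  · rw [min_eq_left h] at h1; rw [max_eq_right h] at h2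
    exact convex_pair_aux hV h1 h2
  · rw [min_eq_right h] at h1; rw [max_eq_left h] at h2
    have := convex_pair_aux hV h1 h2
    have hc : v + u - M = u + v - M := by ring
    rw [hc] at this
    linarith

lemma step_ineq {V : ℝ → ℝ} (hV : ConvexOn ℝ Set.univ V) (a a' b b' : ℝ) :
    V (max a' b' - max a b) + V (min a' b' - min a b) ≤ V (a' - a) + V (b' - b) := by
  set u := a' - a
  set v := b' - b
  set M := max a' b' - max a b with hM
  have hmm : min a' b' - min a b = u + v - M := by
    have h1 : min a' b' + max a' b' = a' + b' := min_add_max a' b'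
    have h2 : min a b + max a b = a + b := min_add_max a b
    simp only [u, v, M]; linarith
  rw [hmm]
  apply convex_pair hV
  · rcases le_total a b with h | h
    · rcases le_total a' b' with h' | h'
      · rw [hM, max_eq_right h, max_eq_right h']
        exact min_le_of_right_le le_rfl
      · rw [hM, max_eq_right h, max_eq_left h']
        exact min_le_of_right_le (by simp only [v]; linarith)
    · rcases le_total a' b' with h' | h'
      · rw [hM, max_eq_left h, max_eq_right h']
        exact min_le_of_left_le (by simp only [u]; linarith)
      · rw [hM, max_eq_left h, max_eq_left h']
        exact min_le_of_left_le le_rfl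
  · rcases le_total a b with h | h
    · rcases le_total a' b' with h' | h'
      · rw [hM, max_eq_right h, max_eq_right h']
        exact le_max_of_le_right le_rfl
      · rw [hM, max_eq_right h, max_eq_left h']
        exact le_max_of_le_left (by simp only [u]; linarith)
    · rcases le_total a' b' with h' | h'
      · rw [hM, max_eq_left h, max_eq_right h']
        exact le_max_of_le_right (by simp only [v]; linarith)
      · rw [hM, max_eq_left h, max_eq_left h']
        exact le_max_of_le_left le_rfl

lemma conf_sup (N : ℕ) (x y : Fin (N - 1) → ℝ) (k : ℕ) :
    conf N (x ⊔ y) k = max (conf N x k) (conf N y k) := by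
  unfold conf
  by_cases h : 1 ≤ k ∧ k ≤ N - 1
  · simp only [dif_pos h]; rfl
  · simp only [dif_neg h, max_self]

lemma conf_inf (N : ℕ) (x y : Fin (N - 1) → ℝ) (k : ℕ) :
    conf N (x ⊓ y) k = min (conf N x k) (conf N y k) := by
  unfold conf
  by_cases h : 1 ≤ k ∧ k ≤ N - 1
  · simp only [dif_pos h]; rfl
  · simp only [dif_neg h, min_self]

lemma conf_measurable (N : ℕ) : Measurable (conf N) := by
  rw [measurable_pi_iff]
  intro k
  unfold conf
  by_cases h : 1 ≤ k ∧ k ≤ N - 1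
  · simp only [dif_pos h]; exact measurable_pi_apply _
  · simp only [dif_neg h]; exact measurable_const

lemma ham_supermod {V : ℝ → ℝ} (hV : ConvexOn ℝ Set.univ V) (N : ℕ)
    (x y : Fin (N - 1) → ℝ) :
    Ham V N (conf N (x ⊔ y)) + Ham V N (conf N (x ⊓ y))
      ≤ Ham V N (conf N x) + Ham V N (conf N y) := by
  unfold Ham
  rw [← Finset.sum_add_distrib, ← Finset.sum_add_distrib]
  apply Finset.sum_le_sum
  intro k _
  rw [conf_sup, conf_sup, conf_inf, conf_inf]
  exact step_ineq hV (conf N x k) (conf N x (k + 1)) (conf N y k) (conf N y (k + 1))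

lemma ham_measurable {V : ℝ → ℝ} (hVc : Continuous V) (N : ℕ) :
    Measurable fun y : Fin (N - 1) → ℝ => Ham V N (conf N y) := by
  unfold Ham
  apply Finset.measurable_sum
  intro k _
  apply hVc.measurable.comp
  exact ((conf_measurable N).eval.sub (conf_measurable N).eval)

/-- **Conditional stochastic domination.** For `V ∈ 𝒞`, `N ≥ 2`, and increasing Borel sets
`A, B` of positive `π_N`-measure such that `x ∈ A, y ∈ B ⟹ min(x,y) ∈ B`, the conditional
measure `π_N(·|A)` stochastically dominates `π_N(·|B)`: for every bounded measurable increasing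
`f`, `π_N(f|A) ≥ π_N(f|B)`. -/
theorem conditional_stochastic_domination (V : ℝ → ℝ) (hV : InClassC V) (N : ℕ) (hN : 2 ≤ N)
    (A B : Set (ℕ → ℝ)) (hAmeas : MeasurableSet A) (hBmeas : MeasurableSet B)
    (hAinc : ∀ x ∈ A, ∀ y : ℕ → ℝ, (∀ k ≤ N, x k ≤ y k) → y ∈ A)
    (hBinc : ∀ x ∈ B, ∀ y : ℕ → ℝ, (∀ k ≤ N, x k ≤ y k) → y ∈ B)
    (hApos : 0 < piN V N A) (hBpos : 0 < piN V N B)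
    (hmin : ∀ x ∈ A, ∀ y ∈ B, (fun k => min (x k) (y k)) ∈ B)
    (f : (ℕ → ℝ) → ℝ) (hf : Measurable f) (hfb : ∃ M : ℝ, ∀ x, |f x| ≤ M)
    (hfm : ∀ x y : ℕ → ℝ, (∀ k ≤ N, x k ≤ y k) → f x ≤ f y) :
    (∫ x in B, f x ∂piN V N) / (piN V N B).toReal ≤
      (∫ x in A, f x ∂piN V N) / (piN V N A).toReal := by
  classical
  obtain ⟨M, hM⟩ := hfb
  have hconf : Measurable (conf N) := conf_measurable N
  have hVc : Continuous V := by
    rw [← continuousOn_univ]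
    exact hV.convex.continuousOn isOpen_univ
  have hHm : Measurable fun y : Fin (N - 1) → ℝ => Ham V N (conf N y) := ham_measurable hVc N
  set ρ : (Fin (N - 1) → ℝ) → ℝ := fun y => Real.exp (-(Ham V N (conf N y))) with hρdef
  have hρm : Measurable ρ := Real.continuous_exp.measurable.comp hHm.neg
  have hρpos : ∀ y, 0 < ρ y := fun y => Real.exp_pos _
  set Z := Zpart V N with hZdef
  set d : (Fin (N - 1) → ℝ) → ℝ≥0∞ := fun y => ENNReal.ofReal (ρ y / Z) with hddef
  have hdm : Measurable d := ENNReal.measurable_ofReal.comp (hρm.div_const Z)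
  set μ := (volume : Measure (Fin (N - 1) → ℝ)).withDensity d with hμdef
  have hpiN : piN V N = Measure.map (conf N) μ := rfl
  -- positivity of the partition function
  have hZpos : 0 < Z := by
    by_contra hZ
    push_neg at hZ
    have hd0 : d = fun _ => (0 : ℝ≥0∞) := by
      funext y
      have hle : ρ y / Z ≤ 0 := div_nonpos_of_nonneg_of_nonpos (hρpos y).le hZ
      simp [hddef, ENNReal.ofReal_eq_zero.2 hle]
    have hμ0 : μ = 0 := by
      rw [hμdef, hd0]
      exact withDensity_zero
    rw [hpiN, hμ0] at hApos
    simp at hApos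
  have hint : Integrable ρ (volume : Measure (Fin (N - 1) → ℝ)) := by
    by_contra hni
    have : Z = 0 := integral_undef hni
    exact absurd this hZpos.ne'
  haveI hμfin : IsFiniteMeasure μ := by
    constructor
    rw [hμdef, withDensity_apply _ MeasurableSet.univ, Measure.restrict_univ]
    exact (hint.div_const Z).lintegral_lt_top
  haveI hπfin : IsFiniteMeasure (piN V N) := by
    constructor
    rw [hpiN, Measure.map_apply hconf MeasurableSet.univ]
    exact measure_lt_top μ _
  -- transported sets
  have hA'm : MeasurableSet (conf N ⁻¹' A) := hconf hAmeas
  have hB'm : MeasurableSet (conf N ⁻¹' B) := hconf hBmeas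
  -- density supermodularity
  have hdsup : ∀ x y : Fin (N - 1) → ℝ, d x * d y ≤ d (x ⊔ y) * d (x ⊓ y) := by
    intro x y
    show ENNReal.ofReal (ρ x / Z) * ENNReal.ofReal (ρ y / Z) ≤ _
    rw [← ENNReal.ofReal_mul (div_nonneg (hρpos x).le hZpos.le),
      ← ENNReal.ofReal_mul (div_nonneg (hρpos _).le hZpos.le)]
    apply ENNReal.ofReal_le_ofReal
    rw [div_mul_div_comm, div_mul_div_comm]
    gcongr (?_ : ℝ) / (Z * Z)
    have hs := ham_supermod hV.convex N x y
    calc ρ x * ρ y = Real.exp (-(Ham V N (conf N x)) + -(Ham V N (conf N y))) :=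
          (Real.exp_add _ _).symm
      _ ≤ Real.exp (-(Ham V N (conf N (x ⊔ y))) + -(Ham V N (conf N (x ⊓ y)))) :=
          Real.exp_le_exp.2 (by linarith)
      _ = ρ (x ⊔ y) * ρ (x ⊓ y) := Real.exp_add _ _
  -- the AD condition
  have hcond : ∀ x y : Fin (N - 1) → ℝ,
      (ENNReal.ofReal (f (conf N x) + M) * (conf N ⁻¹' B).indicator (fun _ => 1) x * d x) *
        ((conf N ⁻¹' A).indicator (fun _ => 1) y * d y) ≤
      (ENNReal.ofReal (f (conf N (x ⊔ y)) + M) *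
          (conf N ⁻¹' A).indicator (fun _ => 1) (x ⊔ y) * d (x ⊔ y)) *
        ((conf N ⁻¹' B).indicator (fun _ => 1) (x ⊓ y) * d (x ⊓ y)) := by
    intro x y
    by_cases hxB : x ∈ conf N ⁻¹' B
    · by_cases hyA : y ∈ conf N ⁻¹' A
      · have hsupA : x ⊔ y ∈ conf N ⁻¹' A := by
          apply hAinc _ hyA
          intro k _
          rw [conf_sup]
          exact le_max_right _ _
        have hinfB : x ⊓ y ∈ conf N ⁻¹' B := by
          have h0 := hmin _ hyA _ hxB
          have he : (fun k => min (conf N y k) (conf N x k)) = conf N (x ⊓ y) := by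
            funext k
            rw [conf_inf]
            exact (min_comm _ _)
          rwa [he] at h0
        have h1 : ENNReal.ofReal (f (conf N x) + M)
            ≤ ENNReal.ofReal (f (conf N (x ⊔ y)) + M) := by
          apply ENNReal.ofReal_le_ofReal
          have := hfm (conf N x) (conf N (x ⊔ y))
            (fun k _ => by rw [conf_sup]; exact le_max_left _ _)
          linarith
        rw [Set.indicator_of_mem hxB, Set.indicator_of_mem hyA, Set.indicator_of_mem hsupA,
          Set.indicator_of_mem hinfB]
        simp only [mul_one, one_mul]
        calc ENNReal.ofReal (f (conf N x) + M) * d x * d y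
            = ENNReal.ofReal (f (conf N x) + M) * (d x * d y) := by ring
          _ ≤ ENNReal.ofReal (f (conf N (x ⊔ y)) + M) * (d (x ⊔ y) * d (x ⊓ y)) :=
              mul_le_mul' h1 (hdsup x y)
          _ = ENNReal.ofReal (f (conf N (x ⊔ y)) + M) * d (x ⊔ y) * d (x ⊓ y) := by ring
      · rw [Set.indicator_of_notMem hyA]
        simp only [zero_mul, mul_zero]
        exact zero_le
    · rw [Set.indicator_of_notMem hxB]
      simp only [zero_mul, mul_zero]
      exact zero_le
  -- Ahlswede–Daykin
  have hiAm : Measurable ((conf N ⁻¹' A).indicator (fun _ => (1 : ℝ≥0∞))) :=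
    measurable_const.indicator hA'm
  have hiBm : Measurable ((conf N ⁻¹' B).indicator (fun _ => (1 : ℝ≥0∞))) :=
    measurable_const.indicator hB'm
  have hgm : Measurable fun y => ENNReal.ofReal (f (conf N y) + M) :=
    ENNReal.measurable_ofReal.comp ((hf.comp hconf).add_const M)
  have hAD := ad_pi (N - 1)
    (fun y => ENNReal.ofReal (f (conf N y) + M) *
      (conf N ⁻¹' A).indicator (fun _ => 1) y * d y)
    (fun y => (conf N ⁻¹' B).indicator (fun _ => 1) y * d y)
    (fun y => ENNReal.ofReal (f (conf N y) + M) *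
      (conf N ⁻¹' B).indicator (fun _ => 1) y * d y)
    (fun y => (conf N ⁻¹' A).indicator (fun _ => 1) y * d y)
    ((hgm.mul hiAm).mul hdm) (hiBm.mul hdm) ((hgm.mul hiBm).mul hdm) (hiAm.mul hdm) hcond
  -- bridge between the AD integrals and integrals over piN
  have hbridge : ∀ (S : Set (ℕ → ℝ)), MeasurableSet S → ∀ h : (ℕ → ℝ) → ℝ≥0∞, Measurable h →
      (∫⁻ y, h (conf N y) * (conf N ⁻¹' S).indicator (fun _ => 1) y * d y)
        = ∫⁻ x in S, h x ∂(piN V N) := by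
    intro S hS h hh
    rw [hpiN, setLIntegral_map hS hh hconf, hμdef, restrict_withDensity (hconf hS),
      lintegral_withDensity_eq_lintegral_mul _ hdm
        (show Measurable fun y => h (conf N y) from hh.comp hconf),
      ← lintegral_indicator (hconf hS)]
    congr 1
    funext y
    by_cases hy : y ∈ conf N ⁻¹' S
    · rw [Set.indicator_of_mem hy, Set.indicator_of_mem hy]
      simp only [Pi.mul_apply, Function.comp_apply]
      ring
    · rw [Set.indicator_of_notMem hy, Set.indicator_of_notMem hy]
      simp
  have hbA : (∫⁻ y, ENNReal.ofReal (f (conf N y) + M) *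
      (conf N ⁻¹' A).indicator (fun _ => 1) y * d y)
        = ∫⁻ x in A, ENNReal.ofReal (f x + M) ∂(piN V N) :=
    hbridge A hAmeas (fun x => ENNReal.ofReal (f x + M))
      (ENNReal.measurable_ofReal.comp (hf.add_const M))
  have hbB : (∫⁻ y, ENNReal.ofReal (f (conf N y) + M) *
      (conf N ⁻¹' B).indicator (fun _ => 1) y * d y)
        = ∫⁻ x in B, ENNReal.ofReal (f x + M) ∂(piN V N) :=
    hbridge B hBmeas (fun x => ENNReal.ofReal (f x + M))
      (ENNReal.measurable_ofReal.comp (hf.add_const M))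
  have hbA1 : (∫⁻ y, (conf N ⁻¹' A).indicator (fun _ => 1) y * d y) = piN V N A := by
    have h0 := hbridge A hAmeas (fun _ => 1) measurable_const
    simp only [one_mul] at h0
    rw [h0, setLIntegral_one]
  have hbB1 : (∫⁻ y, (conf N ⁻¹' B).indicator (fun _ => 1) y * d y) = piN V N B := by
    have h0 := hbridge B hBmeas (fun _ => 1) measurable_const
    simp only [one_mul] at h0
    rw [h0, setLIntegral_one]
  rw [hbA, hbB, hbA1, hbB1] at hAD
  -- hAD : JB * piN A ≤ JA * piN B
  -- finiteness facts
  have hπAne : piN V N A ≠ ⊤ := measure_ne_top _ _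
  have hπBne : piN V N B ≠ ⊤ := measure_ne_top _ _
  have hJfin : ∀ S : Set (ℕ → ℝ),
      (∫⁻ x in S, ENNReal.ofReal (f x + M) ∂(piN V N)) ≠ ⊤ := by
    intro S
    have hb : (∫⁻ x in S, ENNReal.ofReal (f x + M) ∂(piN V N))
        ≤ ENNReal.ofReal (M + M) * piN V N S := by
      rw [← setLIntegral_const S (ENNReal.ofReal (M + M))]
      apply lintegral_mono
      intro x
      exact ENNReal.ofReal_le_ofReal (by linarith [(abs_le.1 (hM x)).2])
    exact (hb.trans_lt (ENNReal.mul_lt_top ENNReal.ofReal_lt_top (measure_lt_top _ _))).ne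
  -- conversion to real integrals
  have hfi : ∀ S : Set (ℕ → ℝ), Integrable f ((piN V N).restrict S) := by
    intro S
    apply Integrable.mono' (integrable_const M) hf.aestronglyMeasurable
    exact Filter.Eventually.of_forall hM
  have hconv : ∀ S : Set (ℕ → ℝ), MeasurableSet S → ∫ x in S, f x ∂(piN V N)
      = (∫⁻ x in S, ENNReal.ofReal (f x + M) ∂(piN V N)).toReal - M * (piN V N S).toReal := by
    intro S hS
    have h1 : ∫ x in S, (f x + M) ∂(piN V N)
        = (∫⁻ x in S, ENNReal.ofReal (f x + M) ∂(piN V N)).toReal := by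
      rw [integral_eq_lintegral_of_nonneg_ae]
      · exact ae_of_all _ fun x => by simp only [Pi.zero_apply]; linarith [(abs_le.1 (hM x)).1]
      · exact (hf.add_const M).aestronglyMeasurable
    have h2 : ∫ x in S, (f x + M) ∂(piN V N)
        = (∫ x in S, f x ∂(piN V N)) + M * (piN V N S).toReal := by
      rw [integral_add (hfi S) (integrable_const M), setIntegral_const, smul_eq_mul, mul_comm, measureReal_def]
    linarith
  rw [hconv A hAmeas, hconv B hBmeas]
  have ha : 0 < (piN V N A).toReal := ENNReal.toReal_pos hApos.ne' hπAne
  have hb : 0 < (piN V N B).toReal := ENNReal.toReal_pos hBpos.ne' hπBne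
  have key : (∫⁻ x in B, ENNReal.ofReal (f x + M) ∂(piN V N)).toReal * (piN V N A).toReal
      ≤ (∫⁻ x in A, ENNReal.ofReal (f x + M) ∂(piN V N)).toReal * (piN V N B).toReal := by
    have := ENNReal.toReal_mono (ENNReal.mul_ne_top (hJfin A) hπBne) hAD
    rwa [ENNReal.toReal_mul, ENNReal.toReal_mul] at this
  rw [div_le_div_iff₀ hb ha]
  nlinarith [key]

end
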